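/- Suppose a graph G = (V, E) has a non-blocking 2D grid-obstacle representation: an injective placement φ: V → Z^2 and an obstacle set O ⊆ Z^2 disjoint from φ(V), such that (u,v) ∈ E iff there is an xy-monotone grid path from φ(u) to φ(v) avoiding O (vertex points do not block). Then E can be written as E_b ∪ E_r (possibly overlapping) such that both (V, E_b) and (V, E_r) are comparability graphs. -/

import Mathlib

/-- A single grid step in ℤ²: consecutive points differ by 1 in exactly one coordinate. -/
def GridStep (p q : ℤ × ℤ) : Prop := |q.1 - p.1| + |q.2 - p.2| = 1

/-- A grid path in ℤ²: a nonempty finite sequence of lattice points with unit axis steps. -/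
def IsGridPath (l : List (ℤ × ℤ)) : Prop := l ≠ [] ∧ l.Chain' GridStep

/-- Both coordinates weakly nondecreasing along the path. -/
def NondecPath (l : List (ℤ × ℤ)) : Prop := l.Chain' (fun p q => p.1 ≤ q.1 ∧ p.2 ≤ q.2)

/-- xy-monotone: each coordinate is weakly monotone (in some direction) along the path. -/
def XYMono (l : List (ℤ × ℤ)) : Prop :=
  (l.Chain' (fun p q => p.1 ≤ q.1) ∨ l.Chain' (fun p q => q.1 ≤ p.1)) ∧
  (l.Chain' (fun p q => p.2 ≤ q.2) ∨ l.Chain' (fun p q => q.2 ≤ p.2))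

/-- The path contains no obstacle point. -/
def AvoidsObstacles (O : Set (ℤ × ℤ)) (l : List (ℤ × ℤ)) : Prop := ∀ p ∈ l, p ∉ O

/-- There is an xy-monotone grid path from p to q avoiding the obstacle set O. -/
def MonoAvoidReach (O : Set (ℤ × ℤ)) (p q : ℤ × ℤ) : Prop :=
  ∃ l : List (ℤ × ℤ), IsGridPath l ∧ XYMono l ∧ AvoidsObstacles O l ∧
    l.head? = some p ∧ l.getLast? = some q

/-- A comparability graph: edges can be oriented as a transitive DAG
(a strict partial order whose comparability relation is the adjacency). -/
def IsComparabilityGraph {V : Type*} (H : SimpleGraph V) : Prop :=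
  ∃ r : V → V → Prop, (∀ u, ¬ r u u) ∧ (∀ u v w, r u v → r v w → r u w) ∧
    (∀ u v, H.Adj u v ↔ (r u v ∨ r v u))


section Aux
variable {α : Type*}

def LReach (R : α → α → Prop) (O : Set α) (p q : α) : Prop :=
  ∃ l : List α, l ≠ [] ∧ l.Chain' R ∧ (∀ x ∈ l, x ∉ O) ∧ l.head? = some p ∧ l.getLast? = some q

lemma lreach_trans {R : α → α → Prop} {O : Set α} {p q r : α}
    (h1 : LReach R O p q) (h2 : LReach R O q r) : LReach R O p r := by
  obtain ⟨l1, hl1ne, hc1, ha1, hh1, hg1⟩ := h1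
  obtain ⟨l2, hl2ne, hc2, ha2, hh2, hg2⟩ := h2
  obtain ⟨b, t, rfl⟩ := List.exists_cons_of_ne_nil hl2ne
  have hb : b = q := by simpa using hh2
  subst hb
  refine ⟨l1 ++ t, by simp [hl1ne], ?_, ?_, ?_, ?_⟩
  · apply List.IsChain.append hc1 (List.isChain_cons.mp hc2).2
    intro x hx y hy
    rw [hg1] at hx
    simp only [Option.mem_def, Option.some.injEq] at hx
    subst hx
    exact (List.isChain_cons.mp hc2).1 y hy
  · intro x hx
    rcases List.mem_append.mp hx with h | h
    · exact ha1 x h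
    · exact ha2 x (List.mem_cons_of_mem _ h)
  · obtain ⟨a, t1, rfl⟩ := List.exists_cons_of_ne_nil hl1ne
    simpa using hh1
  · cases t with
    | nil =>
      obtain rfl : b = r := by simpa using hg2
      simpa using hg1
    | cons c t' =>
      have hct : (c :: t').getLast? = some r := by
        rw [← hg2]; exact (List.getLast?_cons_cons ..).symm
      rw [List.getLast?_append, hct]
      rfl

lemma lreach_reverse {R : α → α → Prop} {O : Set α} {p q : α} (h : LReach R O p q) :
    LReach (fun a b => R b a) O q p := by
  obtain ⟨l, hne, hc, ha, hh, hg⟩ := h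
  refine ⟨l.reverse, by simpa, ?_, fun x hx => ha x (List.mem_reverse.mp hx), ?_, ?_⟩
  · exact List.isChain_reverse.mpr hc
  · rwa [List.head?_reverse]
  · rwa [List.getLast?_reverse]

lemma chain'_and3 {R S T : α → α → Prop} {l : List α} :
    l.Chain' (fun a b => R a b ∧ S a b ∧ T a b) ↔ l.Chain' R ∧ l.Chain' S ∧ l.Chain' T := by
  simp only [List.Chain', List.isChain_iff_getElem]
  exact ⟨fun h => ⟨fun i hi => (h i hi).1, fun i hi => (h i hi).2.1, fun i hi => (h i hi).2.2⟩,
    fun ⟨h1, h2, h3⟩ i hi => ⟨h1 i hi, h2 i hi, h3 i hi⟩⟩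

lemma rel_head_last {S : α → α → Prop} (hrefl : ∀ a, S a a)
    (htrans : ∀ a b c, S a b → S b c → S a c) :
    ∀ {l : List α} {p q : α}, l.Chain' S → l.head? = some p → l.getLast? = some q → S p q := by
  intro l
  induction l with
  | nil => intro p q _ h; cases h
  | cons a t ih =>
    intro p q hc hp hq
    obtain rfl : a = p := by simpa using hp
    cases t with
    | nil =>
      obtain rfl : a = q := by simpa using hq
      exact hrefl a
    | cons b t' =>
      have h1 : S a b := (List.isChain_cons_cons.mp hc).1
      have h2 := (List.isChain_cons_cons.mp hc).2
      have hq' : (b :: t').getLast? = some q := by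
        rw [← hq]; exact (List.getLast?_cons_cons ..).symm
      exact htrans _ _ _ h1 (ih h2 rfl hq')

end Aux

lemma GridStep.symm' {p q : ℤ × ℤ} (h : GridStep p q) : GridStep q p := by
  unfold GridStep at *; rw [abs_sub_comm p.1, abs_sub_comm p.2]; exact h

def RB (p q : ℤ × ℤ) : Prop := GridStep p q ∧ p.1 ≤ q.1 ∧ p.2 ≤ q.2
def RR (p q : ℤ × ℤ) : Prop := GridStep p q ∧ p.1 ≤ q.1 ∧ q.2 ≤ p.2

lemma lreach_of_path {O : Set (ℤ × ℤ)} {p q : ℤ × ℤ} {S T : ℤ × ℤ → ℤ × ℤ → Prop}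
    {l : List (ℤ × ℤ)} (hne : l ≠ []) (hg : l.Chain' GridStep) (hs : l.Chain' S)
    (ht : l.Chain' T) (hav : ∀ x ∈ l, x ∉ O) (hh : l.head? = some p)
    (hl : l.getLast? = some q) :
    LReach (fun a b => GridStep a b ∧ S a b ∧ T a b) O p q :=
  ⟨l, hne, chain'_and3.mpr ⟨hg, hs, ht⟩, hav, hh, hl⟩

lemma lreach_of_path_rev {O : Set (ℤ × ℤ)} {p q : ℤ × ℤ} {S T : ℤ × ℤ → ℤ × ℤ → Prop}
    {l : List (ℤ × ℤ)} (hne : l ≠ []) (hg : l.Chain' GridStep)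
    (hs : l.Chain' (fun a b => S b a)) (ht : l.Chain' (fun a b => T b a))
    (hav : ∀ x ∈ l, x ∉ O) (hh : l.head? = some p) (hl : l.getLast? = some q) :
    LReach (fun a b => GridStep a b ∧ S a b ∧ T a b) O q p := by
  refine ⟨l.reverse, by simpa, ?_, fun x hx => hav x (List.mem_reverse.mp hx), ?_, ?_⟩
  · refine chain'_and3.mpr ⟨?_, ?_, ?_⟩
    · exact List.isChain_reverse.mpr (hg.imp fun a b h => h.symm')
    · exact List.isChain_reverse.mpr hs
    · exact List.isChain_reverse.mpr ht
  · rwa [List.head?_reverse]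
  · rwa [List.getLast?_reverse]

lemma lreach_RB_le {O : Set (ℤ × ℤ)} {p q : ℤ × ℤ} (h : LReach RB O p q) :
    p.1 ≤ q.1 ∧ p.2 ≤ q.2 := by
  obtain ⟨l, hne, hc, _, hh, hg⟩ := h
  exact rel_head_last (S := fun a b : ℤ × ℤ => a.1 ≤ b.1 ∧ a.2 ≤ b.2)
    (fun a => ⟨le_refl _, le_refl _⟩)
    (fun a b c h1 h2 => ⟨le_trans h1.1 h2.1, le_trans h1.2 h2.2⟩)
    (hc.imp fun a b h => h.2) hh hg

lemma lreach_RR_le {O : Set (ℤ × ℤ)} {p q : ℤ × ℤ} (h : LReach RR O p q) :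
    p.1 ≤ q.1 ∧ q.2 ≤ p.2 := by
  obtain ⟨l, hne, hc, _, hh, hg⟩ := h
  exact rel_head_last (S := fun a b : ℤ × ℤ => a.1 ≤ b.1 ∧ b.2 ≤ a.2)
    (fun a => ⟨le_refl _, le_refl _⟩)
    (fun a b c h1 h2 => ⟨le_trans h1.1 h2.1, le_trans h2.2 h1.2⟩)
    (hc.imp fun a b h => h.2) hh hg

lemma lreach_RB_mono {O : Set (ℤ × ℤ)} {p q : ℤ × ℤ} (h : LReach RB O p q) :
    MonoAvoidReach O p q := by
  obtain ⟨l, hne, hc, hav, hh, hg⟩ := h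
  have h3 := chain'_and3.mp hc
  exact ⟨l, ⟨hne, h3.1⟩, ⟨Or.inl h3.2.1, Or.inl h3.2.2⟩, hav, hh, hg⟩

lemma lreach_RR_mono {O : Set (ℤ × ℤ)} {p q : ℤ × ℤ} (h : LReach RR O p q) :
    MonoAvoidReach O p q := by
  obtain ⟨l, hne, hc, hav, hh, hg⟩ := h
  have h3 := chain'_and3.mp hc
  exact ⟨l, ⟨hne, h3.1⟩, ⟨Or.inl h3.2.1, Or.inr h3.2.2⟩, hav, hh, hg⟩


/-- If G has a non-blocking 2D grid-obstacle representation, then its edge set can be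
written as a union of two (possibly overlapping) comparability graphs. -/
theorem nonblocking_rep_comparability {V : Type*} [Fintype V] (G : SimpleGraph V)
    (φ : V → ℤ × ℤ) (hinj : Function.Injective φ)
    (O : Set (ℤ × ℤ)) (hO : ∀ v, φ v ∉ O)
    (hrep : ∀ u v, u ≠ v → (G.Adj u v ↔ MonoAvoidReach O (φ u) (φ v))) :
    ∃ Hb Hr : SimpleGraph V, G = Hb ⊔ Hr ∧
      IsComparabilityGraph Hb ∧ IsComparabilityGraph Hr := by
  classical
  set rb : V → V → Prop := fun u v => φ u ≠ φ v ∧ LReach RB O (φ u) (φ v) with hrb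
  set rr : V → V → Prop := fun u v => φ u ≠ φ v ∧ LReach RR O (φ u) (φ v) with hrr
  have rbtrans : ∀ u v w, rb u v → rb v w → rb u w := by
    rintro u v w ⟨h1, hr1⟩ ⟨h2, hr2⟩
    refine ⟨fun heq => ?_, lreach_trans hr1 hr2⟩
    have a1 := lreach_RB_le hr1
    have a2 := lreach_RB_le hr2
    rw [← heq] at a2
    exact h1 (Prod.ext (le_antisymm a1.1 a2.1) (le_antisymm a1.2 a2.2))
  have rrtrans : ∀ u v w, rr u v → rr v w → rr u w := by
    rintro u v w ⟨h1, hr1⟩ ⟨h2, hr2⟩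
    refine ⟨fun heq => ?_, lreach_trans hr1 hr2⟩
    have a1 := lreach_RR_le hr1
    have a2 := lreach_RR_le hr2
    rw [← heq] at a2
    exact h1 (Prod.ext (le_antisymm a1.1 a2.1) (le_antisymm a2.2 a1.2))
  have back1 : ∀ u v, rb u v → G.Adj u v := by
    rintro u v ⟨h1, hr1⟩
    exact (hrep u v (fun h => h1 (congrArg φ h))).mpr (lreach_RB_mono hr1)
  have back2 : ∀ u v, rr u v → G.Adj u v := by
    rintro u v ⟨h1, hr1⟩
    exact (hrep u v (fun h => h1 (congrArg φ h))).mpr (lreach_RR_mono hr1)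
  have key : ∀ u v, G.Adj u v → (rb u v ∨ rb v u) ∨ (rr u v ∨ rr v u) := by
    intro u v h
    have hne : u ≠ v := G.ne_of_adj h
    have hφ : φ u ≠ φ v := fun he => hne (hinj he)
    obtain ⟨l, ⟨hlne, hgrid⟩, ⟨hx, hy⟩, hav, hh, hg⟩ := (hrep u v hne).mp h
    rcases hx with hx | hx <;> rcases hy with hy | hy
    · exact Or.inl (Or.inl ⟨hφ, lreach_of_path hlne hgrid hx hy hav hh hg⟩)
    · exact Or.inr (Or.inl ⟨hφ, lreach_of_path hlne hgrid hx hy hav hh hg⟩)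
    · exact Or.inr (Or.inr ⟨hφ.symm,
        lreach_of_path_rev (S := fun a b : ℤ × ℤ => a.1 ≤ b.1) (T := fun a b => b.2 ≤ a.2)
          hlne hgrid hx hy hav hh hg⟩)
    · exact Or.inl (Or.inr ⟨hφ.symm,
        lreach_of_path_rev (S := fun a b : ℤ × ℤ => a.1 ≤ b.1) (T := fun a b => a.2 ≤ b.2)
          hlne hgrid hx hy hav hh hg⟩)
  refine ⟨⟨fun u v => rb u v ∨ rb v u, ⟨fun u v h => h.symm⟩,
      ⟨fun u h => by rcases h with h | h <;> exact h.1 rfl⟩⟩,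
    ⟨fun u v => rr u v ∨ rr v u, ⟨fun u v h => h.symm⟩,
      ⟨fun u h => by rcases h with h | h <;> exact h.1 rfl⟩⟩, ?_, ?_, ?_⟩
  · ext u v
    simp only [SimpleGraph.sup_adj]
    constructor
    · exact key u v
    · rintro ((h | h) | (h | h))
      · exact back1 u v h
      · exact (back1 v u h).symm
      · exact back2 u v h
      · exact (back2 v u h).symm
  · exact ⟨rb, fun u h => h.1 rfl, rbtrans, fun u v => Iff.rfl⟩
  · exact ⟨rr, fun u h => h.1 rfl, rrtrans, fun u v => Iff.rfl⟩
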